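/- Corollary 1: Consider a multi-edge type D-GLDPC ensemble in which every variable-node and check-node local code has minimum distance at least 2 and no encoded bit is punctured. Suppose that the following disjointness condition holds: whenever a socket of edge type l ∈ E of a VN type γ ∈ F_{V2} belongs to the support of a weight-2 local codeword of γ, then no CN type δ ∈ F_{C2} has a socket of edge type l belonging to the support of a weight-2 local codeword of δ. Then the matrix product P(ε)·C is the zero matrix, its spectral radius is 0, and the fixed point 1 of the EXIT recursion f(·,ε) is locally stable for every ε ∈ (0,1). -/

import Mathlib

open scoped Classical

noncomputable section

namespace MET

/-- Hamming weight of a binary vector. -/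
def hWeight {m : ℕ} (x : Fin m → ZMod 2) : ℕ :=
  (Finset.univ.filter fun i => x i ≠ 0).card

/-- The row space of `G` (the local code) has minimum Hamming weight at least 2. -/
def HasMinDistGE2 {k q : ℕ} (G : Matrix (Fin k) (Fin q) (ZMod 2)) : Prop :=
  ∀ x : Fin k → ZMod 2, Matrix.vecMul x G ≠ 0 → 2 ≤ hWeight (Matrix.vecMul x G)

/-- The row space of `G` has minimum Hamming weight exactly 2. -/
def HasMinDistEq2 {k q : ℕ} (G : Matrix (Fin k) (Fin q) (ZMod 2)) : Prop :=
  HasMinDistGE2 G ∧ ∃ x : Fin k → ZMod 2, hWeight (Matrix.vecMul x G) = 2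

/-- The weight-2 vector supported on `{i,j}`. -/
def wt2vec {q : ℕ} (i j : Fin q) : Fin q → ZMod 2 :=
  fun r => if r = i ∨ r = j then 1 else 0

/-- Number of columns of edge type `l`. -/
def colCount {q n : ℕ} (τ : Fin q → Fin n) (l : Fin n) : ℕ :=
  (Finset.univ.filter fun j => τ j = l).card

/-- Rank of the matrix formed by the columns of `G` indexed by `A` together with the columns
of the `k × k` identity matrix indexed by `T`. -/
def colRank {k q : ℕ} (G : Matrix (Fin k) (Fin q) (ZMod 2))
    (A : Finset (Fin q)) (T : Finset (Fin k)) : ℕ :=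
  Matrix.rank (Matrix.of fun (i : Fin k) (j : {x // x ∈ A} ⊕ {x // x ∈ T}) =>
    Sum.elim (fun a => G i a.1) (fun t => if i = t.1 then (1 : ZMod 2) else 0) j)

/-- Multi-type split information function `ẽ_{g;u}` of a VN generator matrix. -/
def eTilde {n k q : ℕ} (G : Matrix (Fin k) (Fin q) (ZMod 2)) (τ : Fin q → Fin n)
    (g : Fin n → ℕ) (u : ℕ) : ℕ :=
  ∑ A ∈ Finset.univ.filter (fun A : Finset (Fin q) =>
      ∀ l, (A.filter fun j => τ j = l).card = g l),
    ∑ T ∈ Finset.univ.filter (fun T : Finset (Fin k) => T.card = u),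
      colRank G A T

/-- Multi-type information function `ẽ_g` of a CN generator matrix. -/
def eTildeC {n h s : ℕ} (G : Matrix (Fin h) (Fin s) (ZMod 2)) (τ : Fin s → Fin n)
    (g : Fin n → ℕ) : ℕ :=
  ∑ A ∈ Finset.univ.filter (fun A : Finset (Fin s) =>
      ∀ l, (A.filter fun j => τ j = l).card = g l),
    colRank G A ∅

/-- `χ_{2,u}(l,m)`: ordered pairs of distinct columns of types `l,m` supporting a weight-2
codeword generated by a weight-`u` input word. -/
def chi2 {n k q : ℕ} (G : Matrix (Fin k) (Fin q) (ZMod 2)) (τ : Fin q → Fin n)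
    (u : ℕ) (l m : Fin n) : ℕ :=
  (Finset.univ.filter fun p : Fin q × Fin q =>
    p.1 ≠ p.2 ∧ τ p.1 = l ∧ τ p.2 = m ∧
      ∃ x : Fin k → ZMod 2, hWeight x = u ∧ Matrix.vecMul x G = wt2vec p.1 p.2).card

/-- `ξ_2(l,m)`: ordered pairs of distinct coordinates of types `l,m` supporting a weight-2
codeword of the row space. -/
def xi2 {n h s : ℕ} (G : Matrix (Fin h) (Fin s) (ZMod 2)) (τ : Fin s → Fin n)
    (l m : Fin n) : ℕ :=
  (Finset.univ.filter fun p : Fin s × Fin s =>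
    p.1 ≠ p.2 ∧ τ p.1 = l ∧ τ p.2 = m ∧
      ∃ x : Fin h → ZMod 2, Matrix.vecMul x G = wt2vec p.1 p.2).card

/-- Range of the tuple `t`: `0 ≤ t l ≤ q l` for `l ≠ e` and `0 ≤ t e ≤ q e - 1`. -/
def tRange {n : ℕ} (q : Fin n → ℕ) (e : Fin n) : Finset (Fin n → ℕ) :=
  Fintype.piFinset fun l => Finset.range (if l = e then q l else q l + 1)

/-- The coefficient `a^{(γ,e)}_{t,z}` of the VN EXIT function. -/
def aVN {n k q : ℕ} (G : Matrix (Fin k) (Fin q) (ZMod 2)) (τ : Fin q → Fin n)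
    (e : Fin n) (t : Fin n → ℕ) (z : ℕ) : ℝ :=
  ((colCount τ e - t e : ℕ) : ℝ) *
      (eTilde G τ (fun l => colCount τ l - t l) (k - z) : ℝ)
    - ((t e + 1 : ℕ) : ℝ) *
      (eTilde G τ (fun l => colCount τ l - t l - (if l = e then 1 else 0)) (k - z) : ℝ)

/-- The coefficient `a^{(δ,e)}_{t}` of the CN EXIT function. -/
def aCN {n h s : ℕ} (G : Matrix (Fin h) (Fin s) (ZMod 2)) (τ : Fin s → Fin n)
    (e : Fin n) (t : Fin n → ℕ) : ℝ :=
  ((colCount τ e - t e : ℕ) : ℝ) *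
      (eTildeC G τ (fun l => colCount τ l - t l) : ℝ)
    - ((t e + 1 : ℕ) : ℝ) *
      (eTildeC G τ (fun l => colCount τ l - t l - (if l = e then 1 else 0)) : ℝ)

/-- Per-type VN EXIT function `I_{EV,e}^{(γ)}(I, ε)`. -/
def IEV {n k q : ℕ} (G : Matrix (Fin k) (Fin q) (ZMod 2)) (τ : Fin q → Fin n)
    (e : Fin n) (I : Fin n → ℝ) (ε : ℝ) : ℝ :=
  1 - (1 / (colCount τ e : ℝ)) *
    ∑ z ∈ Finset.range (k + 1), ε ^ z * (1 - ε) ^ (k - z) *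
      ∑ t ∈ tRange (colCount τ) e,
        (∏ l, (1 - I l) ^ t l * (I l) ^ (colCount τ l - t l - (if l = e then 1 else 0))) *
          aVN G τ e t z

/-- Per-type CN EXIT function `I_{EC,e}^{(δ)}(I)`. -/
def IEC {n h s : ℕ} (G : Matrix (Fin h) (Fin s) (ZMod 2)) (τ : Fin s → Fin n)
    (e : Fin n) (I : Fin n → ℝ) : ℝ :=
  1 - (1 / (colCount τ e : ℝ)) *
    ∑ t ∈ tRange (colCount τ) e,
      (∏ l, (1 - I l) ^ t l * (I l) ^ (colCount τ l - t l - (if l = e then 1 else 0))) *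
        aCN G τ e t

section PartA
open Matrix Finset

variable {n k q : ℕ}

lemma zmod2_eq_one {z : ZMod 2} (h : z ≠ 0) : z = 1 := by revert h; revert z; decide

lemma vecMul_inj {G : Matrix (Fin k) (Fin q) (ZMod 2)} (hr : G.rank = k)
    {x : Fin k → ZMod 2} (hx : Matrix.vecMul x G = 0) : x = 0 := by
  have hker : LinearMap.ker (Gᵀ.mulVecLin) = ⊥ := by
    have h1 := LinearMap.finrank_range_add_finrank_ker (Gᵀ.mulVecLin)
    have h2 : Module.finrank (ZMod 2) (LinearMap.range Gᵀ.mulVecLin) = k := by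
      have : Gᵀ.rank = k := by rw [Matrix.rank_transpose]; exact hr
      simpa [Matrix.rank] using this
    have h3 : Module.finrank (ZMod 2) (Fin k → ZMod 2) = k := by simp
    rw [h2, h3] at h1
    have : Module.finrank (ZMod 2) (LinearMap.ker Gᵀ.mulVecLin) = 0 := by omega
    exact Submodule.finrank_eq_zero.mp this
  have : x ∈ LinearMap.ker (Gᵀ.mulVecLin) := by
    simp only [LinearMap.mem_ker, Matrix.mulVecLin_apply, Matrix.mulVec_transpose]
    exact hx
  rw [hker, Submodule.mem_bot] at this
  exact this

/-- If the row-kernel of the extended matrix is trivial then `colRank = k`. -/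
lemma colRank_eq_of_ker {G : Matrix (Fin k) (Fin q) (ZMod 2)} (A : Finset (Fin q))
    (T : Finset (Fin k))
    (hker : ∀ x : Fin k → ZMod 2, (∀ a ∈ A, Matrix.vecMul x G a = 0) →
      (∀ t ∈ T, x t = 0) → x = 0) : colRank G A T = k := by
  classical
  set M : Matrix (Fin k) ({x // x ∈ A} ⊕ {x // x ∈ T}) (ZMod 2) :=
    Matrix.of fun i j =>
      Sum.elim (fun a => G i a.1) (fun t => if i = t.1 then (1 : ZMod 2) else 0) j with hM
  have hvm : ∀ (x : Fin k → ZMod 2) (j), Matrix.vecMul x M j =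
      Sum.elim (fun a : {x // x ∈ A} => Matrix.vecMul x G a.1) (fun t : {x // x ∈ T} => x t.1) j := by
    intro x j
    cases j with
    | inl a => simp [Matrix.vecMul, dotProduct, hM]
    | inr t =>
      simp only [Matrix.vecMul, dotProduct, hM, Matrix.of_apply, Sum.elim_inr]
      rw [Finset.sum_eq_single t.1] <;> simp +contextual [mul_ite]
  have hinj : LinearMap.ker (Mᵀ.mulVecLin) = ⊥ := by
    rw [LinearMap.ker_eq_bot']
    intro x hx
    simp only [Matrix.mulVecLin_apply, Matrix.mulVec_transpose] at hx
    refine hker x (fun a ha => ?_) (fun t ht => ?_)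
    · have := congrFun hx (Sum.inl ⟨a, ha⟩); rw [hvm] at this; simpa using this
    · have := congrFun hx (Sum.inr ⟨t, ht⟩); rw [hvm] at this; simpa using this
  have : Mᵀ.rank = k := by
    rw [Matrix.rank]
    rw [LinearMap.finrank_range_of_inj (LinearMap.ker_eq_bot.mp hinj)]
    simp
  calc colRank G A T = M.rank := rfl
  _ = Mᵀ.rank := (Matrix.rank_transpose M).symm
  _ = k := this

/-- support lemma: if a codeword vanishes off `{i,j}` then it is `0` or equals `wt2vec i j`. -/
lemma codeword_cases {G : Matrix (Fin k) (Fin q) (ZMod 2)} (hmd : HasMinDistGE2 G)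
    (x : Fin k → ZMod 2) (i j : Fin q)
    (hsupp : ∀ a : Fin q, a ≠ i → a ≠ j → Matrix.vecMul x G a = 0) :
    Matrix.vecMul x G = 0 ∨ (i ≠ j ∧ Matrix.vecMul x G = wt2vec i j) := by
  classical
  set v := Matrix.vecMul x G with hv
  by_cases h0 : v = 0
  · exact Or.inl h0
  · right
    have hw : 2 ≤ hWeight v := hmd x h0
    have hsub : (Finset.univ.filter fun a => v a ≠ 0) ⊆ {i, j} := by
      intro a ha
      simp only [Finset.mem_filter] at ha
      by_contra hmem
      simp only [Finset.mem_insert, Finset.mem_singleton, not_or] at hmem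
      exact ha.2 (hsupp a hmem.1 hmem.2)
    have hcard2 : ({i, j} : Finset (Fin q)).card ≤ 2 := Finset.card_insert_le _ _ |>.trans (by simp)
    have heq : (Finset.univ.filter fun a => v a ≠ 0) = {i, j} := by
      apply Finset.eq_of_subset_of_card_le hsub
      calc ({i,j} : Finset (Fin q)).card ≤ 2 := hcard2
      _ ≤ _ := hw
    have hij : i ≠ j := by
      intro hij
      rw [hij] at heq
      have : hWeight v ≤ 1 := by
        unfold hWeight; rw [heq]; simp
      omega
    refine ⟨hij, ?_⟩
    funext a
    by_cases ha : a = i ∨ a = j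
    · have : a ∈ Finset.univ.filter fun a => v a ≠ 0 := by
        rw [heq]; simp only [Finset.mem_insert, Finset.mem_singleton]; exact ha
      simp only [Finset.mem_filter] at this
      rw [wt2vec, if_pos ha]
      exact zmod2_eq_one this.2
    · have : a ∉ Finset.univ.filter fun a => v a ≠ 0 := by
        rw [heq]; simpa using ha
      simp only [Finset.mem_filter, Finset.mem_univ, true_and, not_not] at this
      rw [wt2vec, if_neg ha]
      exact this

lemma colRank_univ {G : Matrix (Fin k) (Fin q) (ZMod 2)} (hr : G.rank = k)
    (T : Finset (Fin k)) : colRank G Finset.univ T = k := by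
  refine colRank_eq_of_ker _ _ (fun x hx _ => ?_)
  refine vecMul_inj hr (funext fun a => hx a (Finset.mem_univ a))

lemma colRank_compl_singleton {G : Matrix (Fin k) (Fin q) (ZMod 2)} (hr : G.rank = k)
    (hmd : HasMinDistGE2 G) (i : Fin q) (T : Finset (Fin k)) :
    colRank G (Finset.univ \ {i}) T = k := by
  refine colRank_eq_of_ker _ _ (fun x hx _ => ?_)
  have hsupp : ∀ a : Fin q, a ≠ i → a ≠ i → Matrix.vecMul x G a = 0 := by
    intro a ha _; exact hx a (by simp [Finset.mem_sdiff, ha])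
  rcases codeword_cases hmd x i i hsupp with h | h
  · exact vecMul_inj hr h
  · exact absurd rfl h.1

lemma colRank_compl_pair {G : Matrix (Fin k) (Fin q) (ZMod 2)} (hr : G.rank = k)
    (hmd : HasMinDistGE2 G) {i j : Fin q}
    (hnc : ¬ ∃ x, Matrix.vecMul x G = wt2vec i j) (T : Finset (Fin k)) :
    colRank G (Finset.univ \ {i, j}) T = k := by
  refine colRank_eq_of_ker _ _ (fun x hx _ => ?_)
  have hsupp : ∀ a : Fin q, a ≠ i → a ≠ j → Matrix.vecMul x G a = 0 := by
    intro a hai haj; exact hx a (by simp [Finset.mem_sdiff, hai, haj])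
  rcases codeword_cases hmd x i j hsupp with h | h
  · exact vecMul_inj hr h
  · exact absurd ⟨x, h.2⟩ hnc

end PartA
section PartB
open Matrix Finset

variable {n q : ℕ} (τ : Fin q → Fin n)

/-- indicator tuple -/
def oneAt (m : Fin n) : Fin n → ℕ := fun l => if l = m then 1 else 0

lemma cnt_card (B : Finset (Fin q)) :
    B.card = ∑ l, (B.filter fun j => τ j = l).card :=
  Finset.card_eq_sum_card_fiberwise (fun x _ => Finset.mem_univ _)

lemma cnt_sdiff (B : Finset (Fin q)) (l : Fin n) :
    ((Finset.univ \ B).filter fun j => τ j = l).card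
      = colCount τ l - (B.filter fun j => τ j = l).card := by
  have h1 : ((Finset.univ \ B).filter fun j => τ j = l)
      = (Finset.univ.filter fun j => τ j = l) \ (B.filter fun j => τ j = l) := by
    ext a; simp only [Finset.mem_filter, Finset.mem_sdiff, Finset.mem_univ]; tauto
  rw [h1, Finset.card_sdiff_of_subset (Finset.filter_subset_filter _ (Finset.subset_univ B))]
  rfl

lemma cnt_le (B : Finset (Fin q)) (l : Fin n) :
    (B.filter fun j => τ j = l).card ≤ colCount τ l :=
  Finset.card_le_card (Finset.filter_subset_filter _ (Finset.subset_univ B))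

lemma sum_cnt_eq_sub (c : Fin n → ℕ) (hle : ∀ l, c l ≤ colCount τ l)
    (R : Finset (Fin q) → ℕ) :
    ∑ A ∈ Finset.univ.filter (fun A : Finset (Fin q) =>
        ∀ l, (A.filter fun j => τ j = l).card = colCount τ l - c l), R A
    = ∑ B ∈ Finset.univ.filter (fun B : Finset (Fin q) =>
        ∀ l, (B.filter fun j => τ j = l).card = c l), R (Finset.univ \ B) := by
  classical
  refine Finset.sum_nbij' (fun A => Finset.univ \ A) (fun B => Finset.univ \ B) ?_ ?_ ?_ ?_ ?_
  · intro A hA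
    simp only [Finset.mem_filter, Finset.mem_univ, true_and] at hA ⊢
    intro l
    rw [cnt_sdiff, hA l]
    have := cnt_le τ A l; have := hle l; omega
  · intro B hB
    simp only [Finset.mem_filter, Finset.mem_univ, true_and] at hB ⊢
    intro l
    rw [cnt_sdiff, hB l]
  · intro A _; simp [Finset.sdiff_sdiff_self_left]
  · intro B _; simp [Finset.sdiff_sdiff_self_left]
  · intro A hA
    simp only [Finset.mem_filter, Finset.mem_univ, true_and] at hA
    rw [Finset.sdiff_sdiff_self_left, Finset.univ_inter]

lemma charac_zero (B : Finset (Fin q)) :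
    (∀ l, (B.filter fun j => τ j = l).card = 0) ↔ B = ∅ := by
  constructor
  · intro h
    have := cnt_card τ B
    simp only [h, Finset.sum_const_zero] at this
    exact Finset.card_eq_zero.mp this
  · intro h; subst h; simp

lemma charac_one (m : Fin n) (B : Finset (Fin q)) :
    (∀ l, (B.filter fun j => τ j = l).card = oneAt m l) ↔ ∃ i, τ i = m ∧ B = {i} := by
  constructor
  · intro h
    have hcard : B.card = 1 := by
      rw [cnt_card τ B]
      simp only [h, oneAt]
      simp
    obtain ⟨i, hi⟩ := Finset.card_eq_one.mp hcard
    refine ⟨i, ?_, hi⟩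
    have hthis := h (τ i)
    rw [hi] at hthis
    by_contra hne
    simp [Finset.filter_singleton, oneAt, hne] at hthis
  · rintro ⟨i, hτ, rfl⟩
    intro l
    by_cases hl : l = m
    · rw [hl]; simp [Finset.filter_singleton, hτ, oneAt]
    · simp [Finset.filter_singleton, oneAt, hτ, hl, Ne.symm hl]

lemma cnt_pair {i j : Fin q} (hij : i ≠ j) (l : Fin n) :
    (({i, j} : Finset (Fin q)).filter fun a => τ a = l).card
      = (if τ i = l then 1 else 0) + (if τ j = l then 1 else 0) := by
  rw [show ({i,j} : Finset (Fin q)) = insert i {j} from rfl, Finset.filter_insert,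
    Finset.filter_singleton]
  by_cases h1 : τ i = l <;> by_cases h2 : τ j = l <;>
    simp [h1, h2, Finset.card_insert_of_notMem, hij]

lemma charac_pair {m e : Fin n} (hme : m ≠ e) (B : Finset (Fin q)) :
    (∀ l, (B.filter fun j => τ j = l).card = oneAt m l + oneAt e l) ↔
      ∃ i j, τ i = m ∧ τ j = e ∧ i ≠ j ∧ B = {i, j} := by
  constructor
  · intro h
    have hm : (B.filter fun j => τ j = m).card = 1 := by
      have := h m; simpa [oneAt, hme, Ne.symm hme] using this
    have he : (B.filter fun j => τ j = e).card = 1 := by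
      have := h e; simpa [oneAt, hme, Ne.symm hme] using this
    obtain ⟨i, hi⟩ := Finset.card_eq_one.mp hm
    obtain ⟨j, hj⟩ := Finset.card_eq_one.mp he
    have hiB : i ∈ B ∧ τ i = m := by
      have : i ∈ B.filter fun j => τ j = m := hi ▸ Finset.mem_singleton_self i
      simpa using this
    have hjB : j ∈ B ∧ τ j = e := by
      have : j ∈ B.filter fun a => τ a = e := hj ▸ Finset.mem_singleton_self j
      simpa using this
    have hij : i ≠ j := fun hh => hme (hiB.2 ▸ hh ▸ hjB.2)
    refine ⟨i, j, hiB.2, hjB.2, hij, ?_⟩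
    apply Finset.Subset.antisymm
    · intro b hb
      have hbl : τ b = m ∨ τ b = e := by
        by_contra hc
        push_neg at hc
        have := h (τ b)
        have hb1 : b ∈ B.filter fun a => τ a = τ b := by simp [hb]
        have : (B.filter fun a => τ a = τ b).card = 0 := by
          rw [this]; simp [oneAt, fun hh : τ b = m => hc.1 hh, fun hh : τ b = e => hc.2 hh]
        rw [Finset.card_eq_zero] at this
        rw [this] at hb1; simp at hb1
      rcases hbl with hb' | hb'
      · have : b ∈ B.filter fun a => τ a = m := by simp [hb, hb']
        rw [hi] at this; simp at this; simp [this]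
      · have : b ∈ B.filter fun a => τ a = e := by simp [hb, hb']
        rw [hj] at this; simp at this; simp [this]
    · intro b hb
      simp only [Finset.mem_insert, Finset.mem_singleton] at hb
      rcases hb with rfl | rfl
      exacts [hiB.1, hjB.1]
  · rintro ⟨i, j, hτi, hτj, hij, rfl⟩
    intro l
    rw [cnt_pair τ hij l]
    simp only [oneAt, hτi, hτj]
    by_cases h1 : l = m <;> by_cases h2 : l = e <;>
      simp [h1, h2, hme] <;> omega

lemma charac_two (e : Fin n) (B : Finset (Fin q)) :
    (∀ l, (B.filter fun j => τ j = l).card = oneAt e l + oneAt e l) ↔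
      B ∈ Finset.powersetCard 2 (Finset.univ.filter fun j => τ j = e) := by
  rw [Finset.mem_powersetCard]
  constructor
  · intro h
    constructor
    · intro b hb
      simp only [Finset.mem_filter, Finset.mem_univ, true_and]
      by_contra hc
      have := h (τ b)
      have hb1 : b ∈ B.filter fun a => τ a = τ b := by simp [hb]
      have h0 : (B.filter fun a => τ a = τ b).card = 0 := by
        rw [this]; simp [oneAt, fun hh : τ b = e => hc hh]
      rw [Finset.card_eq_zero] at h0
      rw [h0] at hb1; simp at hb1
    · rw [cnt_card τ B]
      simp only [h, oneAt]
      rw [Finset.sum_add_distrib]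
      simp
  · rintro ⟨hsub, hcard⟩
    intro l
    by_cases hl : l = e
    · have hB : B.filter (fun j => τ j = l) = B := by
        apply Finset.filter_true_of_mem
        intro b hb
        have hbe := hsub hb
        simp only [Finset.mem_filter, Finset.mem_univ, true_and] at hbe
        rw [hbe, hl]
      rw [hB, hcard]; simp [oneAt, hl]
    · have hB : B.filter (fun j => τ j = l) = ∅ := by
        rw [Finset.filter_eq_empty_iff]
        intro b hb
        have hbe := hsub hb
        simp only [Finset.mem_filter, Finset.mem_univ, true_and] at hbe
        rw [hbe]; exact fun hh => hl hh.symm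
      rw [hB]; simp [oneAt, hl]

end PartB
section PartC
open Matrix Finset

variable {n k q : ℕ}

/-- A socket of type `r` belongs to the support of a weight-2 codeword. -/
def Touched (G : Matrix (Fin k) (Fin q) (ZMod 2)) (τ : Fin q → Fin n) (r : Fin n) : Prop :=
  ∃ i j : Fin q, i ≠ j ∧ (τ i = r ∨ τ j = r) ∧ ∃ x, Matrix.vecMul x G = wt2vec i j

variable (τ : Fin q → Fin n)

lemma eval_full (R : Finset (Fin q) → ℕ) :
    ∑ A ∈ Finset.univ.filter (fun A : Finset (Fin q) =>
      ∀ l, (A.filter fun j => τ j = l).card = colCount τ l), R A = R Finset.univ := by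
  have hf : Finset.univ.filter (fun A : Finset (Fin q) =>
      ∀ l, (A.filter fun j => τ j = l).card = colCount τ l) = {Finset.univ} := by
    ext A
    simp only [Finset.mem_filter, Finset.mem_univ, true_and, Finset.mem_singleton]
    constructor
    · intro hA
      apply Finset.eq_univ_of_card
      rw [cnt_card τ A]
      calc ∑ l, (A.filter fun j => τ j = l).card
          = ∑ l, ((Finset.univ : Finset (Fin q)).filter fun j => τ j = l).card :=
            Finset.sum_congr rfl (fun l _ => hA l)
        _ = (Finset.univ : Finset (Fin q)).card := (cnt_card τ _).symm
        _ = Fintype.card (Fin q) := Finset.card_univ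
    · rintro rfl; intro l; rfl
  rw [hf, Finset.sum_singleton]

lemma eval_one (m : Fin n) (h1 : 1 ≤ colCount τ m) (R : Finset (Fin q) → ℕ) :
    ∑ A ∈ Finset.univ.filter (fun A : Finset (Fin q) =>
      ∀ l, (A.filter fun j => τ j = l).card = colCount τ l - oneAt m l), R A
    = ∑ i ∈ Finset.univ.filter (fun i => τ i = m), R (Finset.univ \ {i}) := by
  have hle : ∀ l, oneAt m l ≤ colCount τ l := by
    intro l; by_cases hl : l = m
    · subst hl; simpa [oneAt] using h1
    · simp [oneAt, hl]
  rw [sum_cnt_eq_sub τ (oneAt m) hle R]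
  have hf : Finset.univ.filter (fun B : Finset (Fin q) =>
      ∀ l, (B.filter fun j => τ j = l).card = oneAt m l)
      = (Finset.univ.filter (fun i => τ i = m)).image (fun i => ({i} : Finset (Fin q))) := by
    ext B
    simp only [Finset.mem_filter, Finset.mem_univ, true_and, Finset.mem_image]
    rw [charac_one]
    constructor
    · rintro ⟨i, hi, rfl⟩; exact ⟨i, by simp [hi]⟩
    · rintro ⟨i, hi, rfl⟩; exact ⟨i, by simpa using hi, rfl⟩
  rw [hf, Finset.sum_image (by intro x _ y _ hxy; simpa using hxy)]

lemma eval_pair {m e : Fin n} (hme : m ≠ e) (h1 : 1 ≤ colCount τ m) (h2 : 1 ≤ colCount τ e)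
    (R : Finset (Fin q) → ℕ) :
    ∑ A ∈ Finset.univ.filter (fun A : Finset (Fin q) =>
      ∀ l, (A.filter fun j => τ j = l).card = colCount τ l - (oneAt m l + oneAt e l)), R A
    = ∑ p ∈ (Finset.univ.filter (fun i => τ i = m)) ×ˢ (Finset.univ.filter (fun i => τ i = e)),
        R (Finset.univ \ {p.1, p.2}) := by
  have hle : ∀ l, oneAt m l + oneAt e l ≤ colCount τ l := by
    intro l; by_cases hl : l = m
    · subst hl; simpa [oneAt, hme] using h1
    · by_cases hl2 : l = e
      · subst hl2; simpa [oneAt, hl] using h2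
      · simp [oneAt, hl, hl2]
  rw [sum_cnt_eq_sub τ _ hle R]
  have hf : Finset.univ.filter (fun B : Finset (Fin q) =>
      ∀ l, (B.filter fun j => τ j = l).card = oneAt m l + oneAt e l)
      = ((Finset.univ.filter (fun i => τ i = m)) ×ˢ (Finset.univ.filter (fun i => τ i = e))).image
          (fun p => ({p.1, p.2} : Finset (Fin q))) := by
    ext B
    simp only [Finset.mem_filter, Finset.mem_univ, true_and, Finset.mem_image,
      Finset.mem_product]
    rw [charac_pair τ hme]
    constructor
    · rintro ⟨i, j, hi, hj, hij, rfl⟩; exact ⟨(i, j), ⟨by simp [hi], by simp [hj]⟩, rfl⟩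
    · rintro ⟨⟨i, j⟩, ⟨hi, hj⟩, rfl⟩
      simp only [Finset.mem_filter, Finset.mem_univ, true_and] at hi hj
      exact ⟨i, j, hi, hj, fun hh => hme ((hh ▸ hi : τ j = m) ▸ hj ▸ rfl), rfl⟩
  rw [hf, Finset.sum_image]
  intro p hp p' hp' hpp
  simp only [Finset.mem_coe, Finset.mem_product, Finset.mem_filter, Finset.mem_univ, true_and] at hp hp'
  have h1p : p.1 ∈ ({p'.1, p'.2} : Finset (Fin q)) := by
    rw [← (show ({p.1, p.2} : Finset (Fin q)) = {p'.1, p'.2} from hpp)]; simp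
  have h2p : p.2 ∈ ({p'.1, p'.2} : Finset (Fin q)) := by
    rw [← (show ({p.1, p.2} : Finset (Fin q)) = {p'.1, p'.2} from hpp)]; simp
  simp only [Finset.mem_insert, Finset.mem_singleton] at h1p h2p
  have e1 : p.1 = p'.1 := by
    rcases h1p with h | h
    · exact h
    · exact absurd (h ▸ hp.1 : τ p'.2 = m) (by rw [hp'.2]; exact Ne.symm hme)
  have e2 : p.2 = p'.2 := by
    rcases h2p with h | h
    · exact absurd (h ▸ hp.2 : τ p'.1 = e) (by rw [hp'.1]; exact hme)
    · exact h
  exact Prod.ext e1 e2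

lemma eval_twin (e : Fin n) (R : Finset (Fin q) → ℕ) (h2 : 2 ≤ colCount τ e) :
    ∑ A ∈ Finset.univ.filter (fun A : Finset (Fin q) =>
      ∀ l, (A.filter fun j => τ j = l).card = colCount τ l - (oneAt e l + oneAt e l)), R A
    = ∑ B ∈ Finset.powersetCard 2 (Finset.univ.filter (fun i => τ i = e)),
        R (Finset.univ \ B) := by
  have hle : ∀ l, oneAt e l + oneAt e l ≤ colCount τ l := by
    intro l; by_cases hl : l = e
    · subst hl; simpa [oneAt] using h2
    · simp [oneAt, hl]
  rw [sum_cnt_eq_sub τ _ hle R]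
  congr 1
  ext B
  simp only [Finset.mem_filter, Finset.mem_univ, true_and]
  exact charac_two τ e B

end PartC
section PartD
open Matrix Finset

variable {n k q : ℕ} {G : Matrix (Fin k) (Fin q) (ZMod 2)} {τ : Fin q → Fin n}

lemma notTouched_pair {r : Fin n} (hnt : ¬ Touched G τ r) {i j : Fin q} (hij : i ≠ j)
    (hor : τ i = r ∨ τ j = r) : ¬ ∃ x, Matrix.vecMul x G = wt2vec i j :=
  fun ⟨x, hx⟩ => hnt ⟨i, j, hij, hor, x, hx⟩

lemma inner_const (hr : G.rank = k) (A : Finset (Fin q)) (u : ℕ)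
    (hA : ∀ T : Finset (Fin k), colRank G A T = k) :
    ∑ T ∈ Finset.univ.filter (fun T : Finset (Fin k) => T.card = u), colRank G A T
      = (Finset.univ.filter (fun T : Finset (Fin k) => T.card = u)).card * k := by
  rw [Finset.sum_congr rfl (fun T _ => hA T), Finset.sum_const, smul_eq_mul]

/-- value of `eTilde` at full column multiset. -/
lemma eTilde_full (hr : G.rank = k) (u : ℕ) :
    eTilde G τ (fun l => colCount τ l) u
      = (Finset.univ.filter (fun T : Finset (Fin k) => T.card = u)).card * k := by
  rw [eTilde, eval_full τ]
  exact inner_const hr _ u (fun T => colRank_univ hr T)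

lemma eTilde_one (hr : G.rank = k) (hmd : HasMinDistGE2 G) (m : Fin n)
    (h1 : 1 ≤ colCount τ m) (u : ℕ) :
    eTilde G τ (fun l => colCount τ l - oneAt m l) u
      = colCount τ m * ((Finset.univ.filter (fun T : Finset (Fin k) => T.card = u)).card * k) := by
  rw [eTilde, eval_one τ m h1]
  rw [Finset.sum_congr rfl (fun i _ => inner_const hr _ u
    (fun T => colRank_compl_singleton hr hmd i T))]
  rw [Finset.sum_const, smul_eq_mul]
  rfl

lemma eTilde_pair (hr : G.rank = k) (hmd : HasMinDistGE2 G) {m e : Fin n} (hme : m ≠ e)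
    (h1 : 1 ≤ colCount τ m) (h2 : 1 ≤ colCount τ e) (hnt : ¬ Touched G τ e) (u : ℕ) :
    eTilde G τ (fun l => colCount τ l - (oneAt m l + oneAt e l)) u
      = colCount τ m * colCount τ e
          * ((Finset.univ.filter (fun T : Finset (Fin k) => T.card = u)).card * k) := by
  rw [eTilde, eval_pair τ hme h1 h2]
  have hterm : ∀ p ∈ (Finset.univ.filter (fun i => τ i = m)) ×ˢ
      (Finset.univ.filter (fun i => τ i = e)),
      (∑ T ∈ Finset.univ.filter (fun T : Finset (Fin k) => T.card = u),
        colRank G (Finset.univ \ {p.1, p.2}) T)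
      = (Finset.univ.filter (fun T : Finset (Fin k) => T.card = u)).card * k := by
    intro p hp
    simp only [Finset.mem_product, Finset.mem_filter, Finset.mem_univ, true_and] at hp
    have hij : p.1 ≠ p.2 := fun hh => hme ((hh ▸ hp.1 : τ p.2 = m) ▸ hp.2 ▸ rfl)
    exact inner_const hr _ u (fun T => colRank_compl_pair hr hmd
      (notTouched_pair hnt hij (Or.inr hp.2)) T)
  rw [Finset.sum_congr rfl hterm, Finset.sum_const, smul_eq_mul, Finset.card_product]
  simp only [colCount, mul_assoc]

lemma eTilde_twin (hr : G.rank = k) (hmd : HasMinDistGE2 G) {e : Fin n}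
    (h2 : 2 ≤ colCount τ e) (hnt : ¬ Touched G τ e) (u : ℕ) :
    eTilde G τ (fun l => colCount τ l - (oneAt e l + oneAt e l)) u
      = (colCount τ e).choose 2
          * ((Finset.univ.filter (fun T : Finset (Fin k) => T.card = u)).card * k) := by
  rw [eTilde, eval_twin τ e _ h2]
  have hterm : ∀ B ∈ Finset.powersetCard 2 (Finset.univ.filter (fun i => τ i = e)),
      (∑ T ∈ Finset.univ.filter (fun T : Finset (Fin k) => T.card = u),
        colRank G (Finset.univ \ B) T)
      = (Finset.univ.filter (fun T : Finset (Fin k) => T.card = u)).card * k := by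
    intro B hB
    rw [Finset.mem_powersetCard] at hB
    obtain ⟨i, j, hij, rfl⟩ := Finset.card_eq_two.mp hB.2
    have hie : τ i = e := by
      have := hB.1 (Finset.mem_insert_self i {j}); simpa using this
    exact inner_const hr _ u (fun T => colRank_compl_pair hr hmd
      (notTouched_pair hnt hij (Or.inl hie)) T)
  rw [Finset.sum_congr rfl hterm, Finset.sum_const, smul_eq_mul, Finset.card_powersetCard]
  rfl

/-- `a^{(γ,e)}_{0,z} = 0`. -/
lemma aVN_zero (hr : G.rank = k) (hmd : HasMinDistGE2 G) {e : Fin n}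
    (hcc : 0 < colCount τ e) (z : ℕ) : aVN G τ e (fun _ => 0) z = 0 := by
  have g1 : (fun l => colCount τ l - (fun _ => (0:ℕ)) l) = fun l => colCount τ l := by
    funext l; simp
  have g2 : (fun l => colCount τ l - (fun _ => (0:ℕ)) l - (if l = e then 1 else 0))
      = fun l => colCount τ l - oneAt e l := by
    funext l; simp [oneAt]
  rw [aVN, g1, g2, eTilde_full hr, eTilde_one hr hmd e hcc]
  rw [sub_eq_zero]
  norm_cast
  rw [Nat.sub_zero]
  ring

/-- `a^{(γ,e)}_{1_l,z} = 0` when type `l` is untouched by weight-2 codewords, `l ≠ e`. -/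
lemma aVN_one_ne (hr : G.rank = k) (hmd : HasMinDistGE2 G) {e l : Fin n} (hle : l ≠ e)
    (hcc : 0 < colCount τ e) (hbl : 1 ≤ colCount τ l) (hnt : ¬ Touched G τ l) (z : ℕ) :
    aVN G τ e (oneAt l) z = 0 := by
  have hte : oneAt l e = 0 := by simp [oneAt, Ne.symm hle]
  have g1 : (fun l' => colCount τ l' - oneAt l l' - (if l' = e then 1 else 0))
      = fun l' => colCount τ l' - (oneAt l l' + oneAt e l') := by
    funext l'; rw [Nat.sub_sub]; rfl
  -- note: the untouched type is `l`; eTilde_pair kills pairs touching its second slot.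
  -- we use (m := e? ) careful: pair lemma has second slot `e` with hnt at `e`.
  -- here pairs are one type-l and one type-e column, and untouched is at l:
  -- use eTilde_pair with m := e, e := l? but the function arg order is (oneAt m + oneAt e).
  have g1' : (fun l' => colCount τ l' - (oneAt l l' + oneAt e l'))
      = fun l' => colCount τ l' - (oneAt e l' + oneAt l l') := by
    funext l'; rw [Nat.add_comm]
  rw [aVN, hte, g1, g1', eTilde_one hr hmd l hbl,
    eTilde_pair hr hmd (Ne.symm hle) hcc hbl hnt]
  rw [sub_eq_zero]
  norm_cast
  rw [Nat.sub_zero]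
  ring

/-- `a^{(γ,e)}_{1_e,z} = 0` when type `e` is untouched. -/
lemma aVN_one_eq (hr : G.rank = k) (hmd : HasMinDistGE2 G) {e : Fin n}
    (hcc2 : 2 ≤ colCount τ e) (hnt : ¬ Touched G τ e) (z : ℕ) :
    aVN G τ e (oneAt e) z = 0 := by
  have hte : oneAt e e = 1 := by simp [oneAt]
  have g1 : (fun l' => colCount τ l' - oneAt e l' - (if l' = e then 1 else 0))
      = fun l' => colCount τ l' - (oneAt e l' + oneAt e l') := by
    funext l'; rw [Nat.sub_sub]; rfl
  rw [aVN, hte, g1, eTilde_one hr hmd e (by omega), eTilde_twin hr hmd hcc2 hnt]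
  rw [sub_eq_zero]
  norm_cast
  have key : 2 * (colCount τ e).choose 2 = colCount τ e * (colCount τ e - 1) := by
    rw [Nat.choose_two_right]
    apply Nat.mul_div_cancel'
    rcases Nat.even_or_odd (colCount τ e) with hpar | hpar
    · exact (hpar.mul_right _).two_dvd
    · exact ((Nat.Odd.sub_odd hpar odd_one).mul_left _).two_dvd
  rw [show (1 + 1) * ((colCount τ e).choose 2 *
      ((Finset.univ.filter (fun T : Finset (Fin k) => T.card = k - z)).card * k))
      = (2 * (colCount τ e).choose 2) *
      ((Finset.univ.filter (fun T : Finset (Fin k) => T.card = k - z)).card * k) by ring,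
    key]
  ring

end PartD
section PartE
open Matrix Finset

variable {n k q : ℕ} {G : Matrix (Fin k) (Fin q) (ZMod 2)} {τ : Fin q → Fin n}

lemma eTildeC_full (hr : G.rank = k) :
    eTildeC G τ (fun l => colCount τ l) = k := by
  rw [eTildeC, eval_full τ]
  exact colRank_univ hr ∅

lemma eTildeC_one (hr : G.rank = k) (hmd : HasMinDistGE2 G) (m : Fin n)
    (h1 : 1 ≤ colCount τ m) :
    eTildeC G τ (fun l => colCount τ l - oneAt m l) = colCount τ m * k := by
  rw [eTildeC, eval_one τ m h1]
  rw [Finset.sum_congr rfl (fun i _ => colRank_compl_singleton hr hmd i ∅),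
    Finset.sum_const, smul_eq_mul]
  rfl

lemma eTildeC_pair (hr : G.rank = k) (hmd : HasMinDistGE2 G) {m e : Fin n} (hme : m ≠ e)
    (h1 : 1 ≤ colCount τ m) (h2 : 1 ≤ colCount τ e) (hnt : ¬ Touched G τ e) :
    eTildeC G τ (fun l => colCount τ l - (oneAt m l + oneAt e l))
      = colCount τ m * colCount τ e * k := by
  rw [eTildeC, eval_pair τ hme h1 h2]
  have hterm : ∀ p ∈ (Finset.univ.filter (fun i => τ i = m)) ×ˢ
      (Finset.univ.filter (fun i => τ i = e)),
      colRank G (Finset.univ \ {p.1, p.2}) ∅ = k := by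
    intro p hp
    simp only [Finset.mem_product, Finset.mem_filter, Finset.mem_univ, true_and] at hp
    have hij : p.1 ≠ p.2 := fun hh => hme ((hh ▸ hp.1 : τ p.2 = m) ▸ hp.2 ▸ rfl)
    exact colRank_compl_pair hr hmd (notTouched_pair hnt hij (Or.inr hp.2)) ∅
  rw [Finset.sum_congr rfl hterm, Finset.sum_const, smul_eq_mul, Finset.card_product]
  simp only [colCount]

lemma eTildeC_twin (hr : G.rank = k) (hmd : HasMinDistGE2 G) {e : Fin n}
    (h2 : 2 ≤ colCount τ e) (hnt : ¬ Touched G τ e) :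
    eTildeC G τ (fun l => colCount τ l - (oneAt e l + oneAt e l))
      = (colCount τ e).choose 2 * k := by
  rw [eTildeC, eval_twin τ e _ h2]
  have hterm : ∀ B ∈ Finset.powersetCard 2 (Finset.univ.filter (fun i => τ i = e)),
      colRank G (Finset.univ \ B) ∅ = k := by
    intro B hB
    rw [Finset.mem_powersetCard] at hB
    obtain ⟨i, j, hij, rfl⟩ := Finset.card_eq_two.mp hB.2
    have hie : τ i = e := by
      have := hB.1 (Finset.mem_insert_self i {j}); simpa using this
    exact colRank_compl_pair hr hmd (notTouched_pair hnt hij (Or.inl hie)) ∅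
  rw [Finset.sum_congr rfl hterm, Finset.sum_const, smul_eq_mul, Finset.card_powersetCard]
  rfl

lemma aCN_zero (hr : G.rank = k) (hmd : HasMinDistGE2 G) {e : Fin n}
    (hcc : 0 < colCount τ e) : aCN G τ e (fun _ => 0) = 0 := by
  have g1 : (fun l => colCount τ l - (fun _ => (0:ℕ)) l) = fun l => colCount τ l := by
    funext l; simp
  have g2 : (fun l => colCount τ l - (fun _ => (0:ℕ)) l - (if l = e then 1 else 0))
      = fun l => colCount τ l - oneAt e l := by
    funext l; simp [oneAt]
  rw [aCN, g1, g2, eTildeC_full hr, eTildeC_one hr hmd e hcc]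
  rw [sub_eq_zero]
  norm_cast
  rw [Nat.sub_zero]
  ring

lemma aCN_one_ne (hr : G.rank = k) (hmd : HasMinDistGE2 G) {e l : Fin n} (hle : l ≠ e)
    (hcc : 0 < colCount τ e) (hbl : 1 ≤ colCount τ l) (hnt : ¬ Touched G τ e) :
    aCN G τ e (oneAt l) = 0 := by
  have hte : oneAt l e = 0 := by simp [oneAt, Ne.symm hle]
  have g1 : (fun l' => colCount τ l' - oneAt l l' - (if l' = e then 1 else 0))
      = fun l' => colCount τ l' - (oneAt l l' + oneAt e l') := by
    funext l'; rw [Nat.sub_sub]; rfl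
  rw [aCN, hte, g1, eTildeC_one hr hmd l hbl, eTildeC_pair hr hmd hle hbl hcc hnt]
  rw [sub_eq_zero]
  norm_cast
  rw [Nat.sub_zero]
  ring

lemma aCN_one_eq (hr : G.rank = k) (hmd : HasMinDistGE2 G) {e : Fin n}
    (hcc2 : 2 ≤ colCount τ e) (hnt : ¬ Touched G τ e) :
    aCN G τ e (oneAt e) = 0 := by
  have hte : oneAt e e = 1 := by simp [oneAt]
  have g1 : (fun l' => colCount τ l' - oneAt e l' - (if l' = e then 1 else 0))
      = fun l' => colCount τ l' - (oneAt e l' + oneAt e l') := by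
    funext l'; rw [Nat.sub_sub]; rfl
  rw [aCN, hte, g1, eTildeC_one hr hmd e (by omega), eTildeC_twin hr hmd hcc2 hnt]
  rw [sub_eq_zero]
  norm_cast
  have key : 2 * (colCount τ e).choose 2 = colCount τ e * (colCount τ e - 1) := by
    rw [Nat.choose_two_right]
    apply Nat.mul_div_cancel'
    rcases Nat.even_or_odd (colCount τ e) with hpar | hpar
    · exact (hpar.mul_right _).two_dvd
    · exact ((Nat.Odd.sub_odd hpar odd_one).mul_left _).two_dvd
  rw [show (1 + 1) * ((colCount τ e).choose 2 * k)
      = (2 * (colCount τ e).choose 2) * k by ring, key]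
  ring

end PartE
section PartF
open Matrix Finset

variable {n k q : ℕ} {G : Matrix (Fin k) (Fin q) (ZMod 2)} {τ : Fin q → Fin n}

/-- derivative at `x = 1` of `x ↦ (1-x)^a x^b`. -/
def dcoef (a b : ℕ) : ℝ := if a = 0 then (b : ℝ) else if a = 1 then -1 else 0

lemma hasDerivAt_factor (a b : ℕ) :
    HasDerivAt (fun x : ℝ => (1 - x) ^ a * x ^ b) (dcoef a b) 1 := by
  have hid : HasDerivAt (fun x : ℝ => 1 - x) (-1) 1 := (hasDerivAt_id 1).const_sub 1
  have h1 := hid.fun_pow a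
  have h2 := hasDerivAt_pow b (1 : ℝ)
  have h3 := h1.fun_mul h2
  refine h3.congr_deriv ?_
  rcases a with _ | a
  · norm_num [dcoef]
  · rcases a with _ | a
    · norm_num [dcoef]
    · norm_num [dcoef, zero_pow]

lemma hasFDerivAt_coord (a b : ℕ) (l : Fin n) :
    HasFDerivAt (fun I : Fin n → ℝ => (1 - I l) ^ a * (I l) ^ b)
      (dcoef a b • (ContinuousLinearMap.proj l : (Fin n → ℝ) →L[ℝ] ℝ)) 1 := by
  have hp : HasFDerivAt (fun I : Fin n → ℝ => I l)
      (ContinuousLinearMap.proj l : (Fin n → ℝ) →L[ℝ] ℝ) 1 :=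
    hasFDerivAt_apply l 1
  exact HasDerivAt.comp_hasFDerivAt 1 (hasDerivAt_factor a b) hp

lemma hasFDerivAt_prodfun (t c : Fin n → ℕ) :
    HasFDerivAt (fun I : Fin n → ℝ => ∏ l, (1 - I l) ^ t l * (I l) ^ c l)
      (∑ l, (∏ j ∈ Finset.univ.erase l,
          (1 - (1 : Fin n → ℝ) j) ^ t j * ((1 : Fin n → ℝ) j) ^ c j) •
        (dcoef (t l) (c l) • (ContinuousLinearMap.proj l : (Fin n → ℝ) →L[ℝ] ℝ))) 1 :=
  HasFDerivAt.finset_prod (fun l _ => hasFDerivAt_coord (t l) (c l) l)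

lemma prod_one_eq_zero {t c : Fin n → ℕ} {j0 : Fin n} (hj0 : t j0 ≠ 0) (s : Finset (Fin n))
    (hmem : j0 ∈ s) :
    (∏ j ∈ s, (1 - (1 : Fin n → ℝ) j) ^ t j * ((1 : Fin n → ℝ) j) ^ c j) = 0 :=
  Finset.prod_eq_zero hmem (by simp [zero_pow hj0])

/-- `IEC` has the value 1 at the all-ones point. -/
lemma IEC_one (hr : G.rank = k) (hmd : HasMinDistGE2 G) {e : Fin n}
    (hcc : 0 < colCount τ e) : IEC G τ e 1 = 1 := by
  rw [IEC]
  have hz : ∑ t ∈ tRange (colCount τ) e,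
      (∏ l, (1 - (1 : Fin n → ℝ) l) ^ t l *
        ((1 : Fin n → ℝ) l) ^ (colCount τ l - t l - if l = e then 1 else 0)) * aCN G τ e t
      = 0 := by
    refine Finset.sum_eq_zero (fun t _ => ?_)
    by_cases h0 : t = fun _ => 0
    · rw [h0, aCN_zero hr hmd hcc, mul_zero]
    · have : ∃ j0, t j0 ≠ 0 := by
        by_contra hc; push_neg at hc; exact h0 (funext hc)
      obtain ⟨j0, hj0⟩ := this
      rw [prod_one_eq_zero hj0 Finset.univ (Finset.mem_univ j0), zero_mul]
  rw [hz, mul_zero, sub_zero]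

/-- `IEV` has the value 1 at the all-ones point. -/
lemma IEV_one (hr : G.rank = k) (hmd : HasMinDistGE2 G) {e : Fin n}
    (hcc : 0 < colCount τ e) (ε : ℝ) : IEV G τ e 1 ε = 1 := by
  rw [IEV]
  have hz : ∀ z : ℕ, ∑ t ∈ tRange (colCount τ) e,
      (∏ l, (1 - (1 : Fin n → ℝ) l) ^ t l *
        ((1 : Fin n → ℝ) l) ^ (colCount τ l - t l - if l = e then 1 else 0)) * aVN G τ e t z
      = 0 := by
    intro z
    refine Finset.sum_eq_zero (fun t _ => ?_)
    by_cases h0 : t = fun _ => 0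
    · rw [h0, aVN_zero hr hmd hcc, mul_zero]
    · have : ∃ j0, t j0 ≠ 0 := by
        by_contra hc; push_neg at hc; exact h0 (funext hc)
      obtain ⟨j0, hj0⟩ := this
      rw [prod_one_eq_zero hj0 Finset.univ (Finset.mem_univ j0), zero_mul]
  have : ∑ z ∈ Finset.range (k + 1), ε ^ z * (1 - ε) ^ (k - z) *
      ∑ t ∈ tRange (colCount τ) e,
        (∏ l, (1 - (1 : Fin n → ℝ) l) ^ t l *
          ((1 : Fin n → ℝ) l) ^ (colCount τ l - t l - if l = e then 1 else 0)) * aVN G τ e t z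
      = 0 := by
    refine Finset.sum_eq_zero (fun z _ => ?_)
    rw [hz z, mul_zero]
  rw [this, mul_zero, sub_zero]

/-- membership facts for `tRange`. -/
lemma tRange_bound {t : Fin n → ℕ} {e : Fin n} {cc : Fin n → ℕ}
    (ht : t ∈ tRange cc e) (l : Fin n) : t l < if l = e then cc l else cc l + 1 := by
  have := (Fintype.mem_piFinset.mp ht) l
  simpa using this

/-- Existence of the derivative of `IEC` at 1, which vanishes under the hypotheses. -/
lemma IEC_deriv (G : Matrix (Fin k) (Fin q) (ZMod 2)) (τ : Fin q → Fin n) (e : Fin n) :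
    ∃ L : (Fin n → ℝ) →L[ℝ] ℝ, HasFDerivAt (fun I => IEC G τ e I) L 1 ∧
      (G.rank = k → HasMinDistGE2 G → 0 < colCount τ e → ¬ Touched G τ e → L = 0) := by
  classical
  set c : (Fin n → ℕ) → Fin n → ℕ :=
    fun t l => colCount τ l - t l - if l = e then 1 else 0 with hc
  set D : (Fin n → ℕ) → (Fin n → ℝ) →L[ℝ] ℝ := fun t =>
    ∑ l, (∏ j ∈ Finset.univ.erase l,
        (1 - (1 : Fin n → ℝ) j) ^ t j * ((1 : Fin n → ℝ) j) ^ c t j) •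
      (dcoef (t l) (c t l) • (ContinuousLinearMap.proj l : (Fin n → ℝ) →L[ℝ] ℝ)) with hD
  have hS : HasFDerivAt (fun I : Fin n → ℝ => ∑ t ∈ tRange (colCount τ) e,
      (∏ l, (1 - I l) ^ t l * (I l) ^ c t l) * aCN G τ e t)
      (∑ t ∈ tRange (colCount τ) e, aCN G τ e t • D t) 1 :=
    HasFDerivAt.fun_sum (fun t _ => (hasFDerivAt_prodfun t (c t)).mul_const _)
  refine ⟨-((1 / (colCount τ e : ℝ)) • ∑ t ∈ tRange (colCount τ) e, aCN G τ e t • D t),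
    ?_, ?_⟩
  · have := (hS.const_mul ((1 : ℝ) / (colCount τ e : ℝ))).const_sub 1
    exact this
  · intro hr hmd hcc hnt
    have hzero : ∀ t ∈ tRange (colCount τ) e, aCN G τ e t • D t = 0 := by
      intro t ht
      by_cases h0 : t = fun _ => 0
      · rw [h0, aCN_zero hr hmd hcc, zero_smul]
      by_cases h1 : ∃ j0, t = oneAt j0
      · obtain ⟨j0, rfl⟩ := h1
        have hb := tRange_bound ht j0
        by_cases hje : j0 = e
        · rw [hje] at hb ⊢
          have hb2 : 2 ≤ colCount τ e := by simp [oneAt] at hb; omega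
          rw [aCN_one_eq hr hmd hb2 hnt, zero_smul]
        · have hb1 : 1 ≤ colCount τ j0 := by simp [oneAt, hje] at hb; omega
          rw [aCN_one_ne hr hmd hje hcc hb1 hnt, zero_smul]
      · -- inner derivative vanishes
        have hDt : D t = 0 := by
          rw [hD]
          refine Finset.sum_eq_zero (fun l _ => ?_)
          by_cases hjl : ∀ j, j ≠ l → t j = 0
          · have htl0 : t l ≠ 0 := by
              intro h; exact h0 (funext fun j => by
                by_cases hj : j = l
                · rw [hj]; exact h
                · exact hjl j hj)
            have htl1 : t l ≠ 1 := by
              intro h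
              refine h1 ⟨l, funext fun j => ?_⟩
              by_cases hj : j = l
              · rw [hj, h]; simp [oneAt]
              · rw [hjl j hj]; simp [oneAt, hj]
            have : dcoef (t l) (c t l) = 0 := by simp [dcoef, htl0, htl1]
            rw [this, zero_smul, smul_zero]
          · push_neg at hjl
            obtain ⟨j0, hj0l, hj0⟩ := hjl
            rw [prod_one_eq_zero hj0 (Finset.univ.erase l)
              (Finset.mem_erase.mpr ⟨hj0l, Finset.mem_univ j0⟩), zero_smul]
        rw [hDt, smul_zero]
    rw [Finset.sum_congr rfl hzero, Finset.sum_const, smul_zero, smul_zero, neg_zero]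

/-- Existence of the derivative of `IEV` at 1, killed on untouched directions. -/
lemma IEV_deriv (G : Matrix (Fin k) (Fin q) (ZMod 2)) (τ : Fin q → Fin n) (e : Fin n) (ε : ℝ) :
    ∃ L : (Fin n → ℝ) →L[ℝ] ℝ, HasFDerivAt (fun I => IEV G τ e I ε) L 1 ∧
      (G.rank = k → HasMinDistGE2 G → 0 < colCount τ e →
        ∀ w : Fin n → ℝ, (∀ r, Touched G τ r → w r = 0) → L w = 0) := by
  classical
  set c : (Fin n → ℕ) → Fin n → ℕ :=
    fun t l => colCount τ l - t l - if l = e then 1 else 0 with hc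
  set D : (Fin n → ℕ) → (Fin n → ℝ) →L[ℝ] ℝ := fun t =>
    ∑ l, (∏ j ∈ Finset.univ.erase l,
        (1 - (1 : Fin n → ℝ) j) ^ t j * ((1 : Fin n → ℝ) j) ^ c t j) •
      (dcoef (t l) (c t l) • (ContinuousLinearMap.proj l : (Fin n → ℝ) →L[ℝ] ℝ)) with hD
  have hS : ∀ z : ℕ, HasFDerivAt (fun I : Fin n → ℝ => ∑ t ∈ tRange (colCount τ) e,
      (∏ l, (1 - I l) ^ t l * (I l) ^ c t l) * aVN G τ e t z)
      (∑ t ∈ tRange (colCount τ) e, aVN G τ e t z • D t) 1 :=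
    fun z => HasFDerivAt.fun_sum (fun t _ => (hasFDerivAt_prodfun t (c t)).mul_const _)
  have hZ : HasFDerivAt (fun I : Fin n → ℝ => ∑ z ∈ Finset.range (k + 1),
      ε ^ z * (1 - ε) ^ (k - z) * ∑ t ∈ tRange (colCount τ) e,
        (∏ l, (1 - I l) ^ t l * (I l) ^ c t l) * aVN G τ e t z)
      (∑ z ∈ Finset.range (k + 1), (ε ^ z * (1 - ε) ^ (k - z)) •
        ∑ t ∈ tRange (colCount τ) e, aVN G τ e t z • D t) 1 :=
    HasFDerivAt.fun_sum (fun z _ => (hS z).const_mul _)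
  refine ⟨-((1 / (colCount τ e : ℝ)) • ∑ z ∈ Finset.range (k + 1),
      (ε ^ z * (1 - ε) ^ (k - z)) • ∑ t ∈ tRange (colCount τ) e, aVN G τ e t z • D t),
    ?_, ?_⟩
  · exact (hZ.const_mul ((1 : ℝ) / (colCount τ e : ℝ))).const_sub 1
  · intro hr hmd hcc w hw
    have hzero : ∀ z ∈ Finset.range (k + 1), ∀ t ∈ tRange (colCount τ) e,
        (aVN G τ e t z • D t) w = 0 := by
      intro z _ t ht
      rw [ContinuousLinearMap.smul_apply, smul_eq_mul]
      by_cases h0 : t = fun _ => 0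
      · rw [h0, aVN_zero hr hmd hcc, zero_mul]
      by_cases h1 : ∃ j0, t = oneAt j0
      · obtain ⟨j0, rfl⟩ := h1
        by_cases hw0 : w j0 = 0
        · -- inner application vanishes
          have : D (oneAt j0) w = 0 := by
            rw [hD]
            rw [ContinuousLinearMap.sum_apply]
            refine Finset.sum_eq_zero (fun l _ => ?_)
            rw [ContinuousLinearMap.smul_apply, ContinuousLinearMap.smul_apply,
              ContinuousLinearMap.proj_apply]
            by_cases hlj : l = j0
            · rw [hlj, hw0]; simp
            · rw [prod_one_eq_zero (t := oneAt j0) (by simp [oneAt] : oneAt j0 j0 ≠ 0)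
                (Finset.univ.erase l)
                (Finset.mem_erase.mpr ⟨fun hh => hlj hh.symm, Finset.mem_univ j0⟩), zero_smul]
          rw [this, mul_zero]
        · have hnt : ¬ Touched G τ j0 := fun ht' => hw0 (hw j0 ht')
          have hb := tRange_bound ht j0
          by_cases hje : j0 = e
          · rw [hje] at hb hnt ⊢
            have hb2 : 2 ≤ colCount τ e := by simp [oneAt] at hb; omega
            rw [aVN_one_eq hr hmd hb2 hnt, zero_mul]
          · have hb1 : 1 ≤ colCount τ j0 := by simp [oneAt, hje] at hb; omega
            rw [aVN_one_ne hr hmd hje hcc hb1 hnt, zero_mul]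
      · have hDt : D t = 0 := by
          rw [hD]
          refine Finset.sum_eq_zero (fun l _ => ?_)
          by_cases hjl : ∀ j, j ≠ l → t j = 0
          · have htl0 : t l ≠ 0 := by
              intro h; exact h0 (funext fun j => by
                by_cases hj : j = l
                · rw [hj]; exact h
                · exact hjl j hj)
            have htl1 : t l ≠ 1 := by
              intro h
              refine h1 ⟨l, funext fun j => ?_⟩
              by_cases hj : j = l
              · rw [hj, h]; simp [oneAt]
              · rw [hjl j hj]; simp [oneAt, hj]
            have : dcoef (t l) (c t l) = 0 := by simp [dcoef, htl0, htl1]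
            rw [this, zero_smul, smul_zero]
          · push_neg at hjl
            obtain ⟨j0, hj0l, hj0⟩ := hjl
            rw [prod_one_eq_zero hj0 (Finset.univ.erase l)
              (Finset.mem_erase.mpr ⟨hj0l, Finset.mem_univ j0⟩), zero_smul]
        rw [hDt, ContinuousLinearMap.zero_apply, mul_zero]
    rw [ContinuousLinearMap.neg_apply, ContinuousLinearMap.smul_apply]
    rw [ContinuousLinearMap.sum_apply]
    rw [Finset.sum_congr rfl (fun z hz => by
      rw [ContinuousLinearMap.smul_apply, ContinuousLinearMap.sum_apply,
        Finset.sum_congr rfl (fun t ht => hzero z hz t ht), Finset.sum_const, smul_zero,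
        smul_zero])]
    rw [Finset.sum_const, smul_zero, smul_zero, neg_zero]

end PartF
/-- A variable node type: a `k × q` generator matrix over `GF(2)` with a typing of its
columns by edge types (no punctured bits). -/
structure VNType (n : ℕ) where
  k : ℕ
  q : ℕ
  G : Matrix (Fin k) (Fin q) (ZMod 2)
  τ : Fin q → Fin n

/-- A check node type: an `h × s` generator matrix over `GF(2)` with a typing of its
columns by edge types. -/
structure CNType (n : ℕ) where
  h : ℕ
  s : ℕ
  G : Matrix (Fin h) (Fin s) (ZMod 2)
  τ : Fin s → Fin n

/-- The variable-node side of a MET D-GLDPC ensemble. -/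
structure VNSide (n : ℕ) where
  nV : ℕ
  vn : Fin nV → VNType n
  lam : Fin nV → Fin n → ℝ
  lam_nonneg : ∀ γ l, 0 ≤ lam γ l
  lam_sum : ∀ l, ∑ γ, lam γ l = 1
  lam_pos_iff : ∀ γ l, 0 < lam γ l ↔ 0 < colCount (vn γ).τ l

/-- The check-node side of a MET D-GLDPC ensemble. -/
structure CNSide (n : ℕ) where
  nC : ℕ
  cn : Fin nC → CNType n
  rho : Fin nC → Fin n → ℝ
  rho_nonneg : ∀ δ l, 0 ≤ rho δ l
  rho_sum : ∀ l, ∑ δ, rho δ l = 1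
  rho_pos_iff : ∀ δ l, 0 < rho δ l ↔ 0 < colCount (cn δ).τ l

/-- A MET D-GLDPC ensemble. -/
structure Ensemble (n : ℕ) extends VNSide n, CNSide n

/-- All VN local codes have full-rank generator matrix and minimum distance at least 2. -/
def VNSide.Good {n : ℕ} (V : VNSide n) : Prop :=
  ∀ γ, ((V.vn γ).G).rank = (V.vn γ).k ∧ HasMinDistGE2 (V.vn γ).G

/-- All CN local codes have full-rank generator matrix and minimum distance at least 2. -/
def CNSide.Good {n : ℕ} (C : CNSide n) : Prop :=
  ∀ δ, ((C.cn δ).G).rank = (C.cn δ).h ∧ HasMinDistGE2 (C.cn δ).G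

/-- The matrix `P(ε)` with entries `P^{l,m}(ε)`. -/
def Pmat {n : ℕ} (V : VNSide n) (ε : ℝ) : Matrix (Fin n) (Fin n) ℝ :=
  Matrix.of fun l m =>
    ∑ γ, if HasMinDistEq2 (V.vn γ).G then
      (V.lam γ l / (colCount (V.vn γ).τ l : ℝ)) *
        ∑ u ∈ Finset.Icc 1 (V.vn γ).k, (chi2 (V.vn γ).G (V.vn γ).τ u l m : ℝ) * ε ^ u
    else 0

/-- The matrix `C` with entries `C^{l,m}`. -/
def Cmat {n : ℕ} (C : CNSide n) : Matrix (Fin n) (Fin n) ℝ :=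
  Matrix.of fun l m =>
    ∑ δ, if HasMinDistEq2 (C.cn δ).G then
      (C.rho δ l / (colCount (C.cn δ).τ l : ℝ)) * (xi2 (C.cn δ).G (C.cn δ).τ l m : ℝ)
    else 0

/-- Aggregate VN EXIT function `I_{EV,e}(I,ε)`. -/
def IEVagg {n : ℕ} (V : VNSide n) (e : Fin n) (I : Fin n → ℝ) (ε : ℝ) : ℝ :=
  ∑ γ ∈ Finset.univ.filter (fun γ => 0 < V.lam γ e),
    V.lam γ e * IEV (V.vn γ).G (V.vn γ).τ e I ε

/-- Aggregate CN EXIT function `I_{EC,e}(I)`. -/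
def IECagg {n : ℕ} (C : CNSide n) (e : Fin n) (I : Fin n → ℝ) : ℝ :=
  ∑ δ ∈ Finset.univ.filter (fun δ => 0 < C.rho δ e),
    C.rho δ e * IEC (C.cn δ).G (C.cn δ).τ e I

/-- The EXIT recursion `f(·,ε)`. -/
def exitMap {n : ℕ} (E : Ensemble n) (ε : ℝ) (I : Fin n → ℝ) : Fin n → ℝ :=
  fun e => IEVagg E.toVNSide e (fun m => IECagg E.toCNSide m I) ε

/-- Local stability of the fixed point `1` of the EXIT recursion. -/
def LocallyStable {n : ℕ} (E : Ensemble n) (ε : ℝ) : Prop :=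
  ∃ U : Set (Fin n → ℝ), IsOpen U ∧ (fun _ => (1 : ℝ)) ∈ U ∧
    ∀ I ∈ U ∩ Set.Icc (fun _ => (0 : ℝ)) (fun _ => (1 : ℝ)),
      Filter.Tendsto (fun m => (exitMap E ε)^[m] I) Filter.atTop (nhds fun _ => (1 : ℝ))

/-- Spectral radius of a real square matrix: the maximum modulus of its complex
eigenvalues. -/
def specRad {m : ℕ} (A : Matrix (Fin m) (Fin m) ℝ) : ℝ :=
  (spectralRadius ℂ (A.map fun x : ℝ => (x : ℂ))).toReal


section PartG
open Matrix Finset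

variable {n : ℕ}

lemma wt2vec_comm {q : ℕ} (i j : Fin q) : wt2vec i j = wt2vec j i := by
  funext r; simp [wt2vec, or_comm]

lemma wt2vec_weight {q : ℕ} {i j : Fin q} (hij : i ≠ j) : hWeight (wt2vec i j) = 2 := by
  have : (Finset.univ.filter fun r => wt2vec i j r ≠ 0) = {i, j} := by
    ext r
    simp only [Finset.mem_filter, Finset.mem_univ, true_and, Finset.mem_insert,
      Finset.mem_singleton, wt2vec]
    by_cases h : r = i ∨ r = j <;> simp [h] <;> tauto
  rw [hWeight, this, Finset.card_insert_of_notMem (by simpa using hij), Finset.card_singleton]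

/-- A touched type (by some weight-2 codeword) forces min distance exactly 2. -/
lemma touched_eq2 {k q : ℕ} {G : Matrix (Fin k) (Fin q) (ZMod 2)} {τ : Fin q → Fin n}
    {r : Fin n} (hmd : HasMinDistGE2 G) (ht : Touched G τ r) : HasMinDistEq2 G := by
  obtain ⟨i, j, hij, _, x, hx⟩ := ht
  exact ⟨hmd, x, by rw [hx]; exact wt2vec_weight hij⟩

/-- value of `IECagg` at the all-ones point. -/
lemma IECagg_one (C : CNSide n) (hC : C.Good) (e : Fin n) : IECagg C e 1 = 1 := by
  rw [IECagg]
  have h1 : ∀ δ ∈ Finset.univ.filter (fun δ => 0 < C.rho δ e),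
      C.rho δ e * IEC (C.cn δ).G (C.cn δ).τ e 1 = C.rho δ e := by
    intro δ hδ
    simp only [Finset.mem_filter, Finset.mem_univ, true_and] at hδ
    rw [IEC_one (hC δ).1 (hC δ).2 ((C.rho_pos_iff δ e).mp hδ), mul_one]
  rw [Finset.sum_congr rfl h1]
  rw [Finset.sum_filter_of_ne (fun δ _ hne => lt_of_le_of_ne (C.rho_nonneg δ e) (Ne.symm hne))]
  exact C.rho_sum e

lemma IEVagg_one (V : VNSide n) (hV : V.Good) (e : Fin n) (ε : ℝ) : IEVagg V e 1 ε = 1 := by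
  rw [IEVagg]
  have h1 : ∀ γ ∈ Finset.univ.filter (fun γ => 0 < V.lam γ e),
      V.lam γ e * IEV (V.vn γ).G (V.vn γ).τ e 1 ε = V.lam γ e := by
    intro γ hγ
    simp only [Finset.mem_filter, Finset.mem_univ, true_and] at hγ
    rw [IEV_one (hV γ).1 (hV γ).2 ((V.lam_pos_iff γ e).mp hγ) ε, mul_one]
  rw [Finset.sum_congr rfl h1]
  rw [Finset.sum_filter_of_ne (fun γ _ hne => lt_of_le_of_ne (V.lam_nonneg γ e) (Ne.symm hne))]
  exact V.lam_sum e

/-- local stability from a vanishing derivative at the fixed point. -/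
lemma stable_of_deriv_zero (f : (Fin n → ℝ) → (Fin n → ℝ))
    (hf1 : f 1 = 1) (hd : HasFDerivAt f (0 : (Fin n → ℝ) →L[ℝ] (Fin n → ℝ)) 1) :
    ∃ U : Set (Fin n → ℝ), IsOpen U ∧ (fun _ => (1 : ℝ)) ∈ U ∧
      ∀ I ∈ U ∩ Set.Icc (fun _ => (0 : ℝ)) (fun _ => (1 : ℝ)),
        Filter.Tendsto (fun m => f^[m] I) Filter.atTop (nhds fun _ => (1 : ℝ)) := by
  have hlo := hd.isLittleO.def (by norm_num : (0:ℝ) < 1/2)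
  simp only [hf1, ContinuousLinearMap.zero_apply, sub_zero] at hlo
  rw [Metric.eventually_nhds_iff] at hlo
  obtain ⟨δ, hδpos, hδ⟩ := hlo
  refine ⟨Metric.ball 1 δ, Metric.isOpen_ball, ?_, ?_⟩
  · have h1 : (fun _ : Fin n => (1:ℝ)) = 1 := rfl
    rw [Metric.mem_ball, h1, dist_self]
    exact hδpos
  rintro I ⟨hIU, -⟩
  have key : ∀ m : ℕ, dist (f^[m] I) 1 ≤ (1/2)^m * dist I 1 ∧ f^[m] I ∈ Metric.ball 1 δ := by
    intro m
    induction m with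
    | zero => exact ⟨by simp, by simpa using hIU⟩
    | succ m ih =>
      obtain ⟨ih1, ih2⟩ := ih
      have hmem := Metric.mem_ball.mp ih2
      have hy := hδ hmem
      have hnorm : dist (f^[m] I) 1 = ‖f^[m] I - 1‖ := dist_eq_norm _ _
      rw [Function.iterate_succ_apply']
      constructor
      · rw [dist_eq_norm]
        calc ‖f (f^[m] I) - 1‖ ≤ 1/2 * ‖f^[m] I - 1‖ := hy
        _ = 1/2 * dist (f^[m] I) 1 := by rw [hnorm]
        _ ≤ 1/2 * ((1/2)^m * dist I 1) := by
            apply mul_le_mul_of_nonneg_left ih1 (by norm_num)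
        _ = (1/2)^(m+1) * dist I 1 := by ring
      · rw [Metric.mem_ball, dist_eq_norm]
        have hlt : ‖f^[m] I - 1‖ < δ := by rw [← hnorm]; exact hmem
        have h1 : (1/2 : ℝ) * ‖f^[m] I - 1‖ < δ := by
          nlinarith [norm_nonneg (f^[m] I - 1)]
        exact lt_of_le_of_lt hy h1
  have htend : Filter.Tendsto (fun m => dist (f^[m] I) (1 : Fin n → ℝ))
      Filter.atTop (nhds 0) := by
    have hb : Filter.Tendsto (fun m : ℕ => (1/2 : ℝ)^m * dist I 1) Filter.atTop (nhds 0) := by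
      have := (tendsto_pow_atTop_nhds_zero_of_lt_one (by norm_num : (0:ℝ) ≤ 1/2)
        (by norm_num : (1/2 : ℝ) < 1)).mul_const (dist I (1 : Fin n → ℝ))
      simpa using this
    exact squeeze_zero (fun m => dist_nonneg) (fun m => (key m).1) hb
  have := tendsto_iff_dist_tendsto_zero.mpr htend
  exact this

end PartG
/-- **Corollary 1.** If no edge type carries both a VN-side and a CN-side socket lying in
the support of a weight-2 local codeword (of a minimum-distance-2 VN type resp. CN type),
then `P(ε) ⬝ C = 0`, its spectral radius is `0`, and the fixed point `1` of the EXIT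
recursion is locally stable for every `ε ∈ (0,1)`. -/
theorem corollary_disjoint_types {n : ℕ} (hn : 1 ≤ n) (E : Ensemble n)
    (hV : E.toVNSide.Good) (hC : E.toCNSide.Good)
    (hdisj : ∀ l : Fin n, ∀ γ : Fin E.nV, HasMinDistEq2 (E.vn γ).G →
      ∀ i j : Fin (E.vn γ).q, i ≠ j → (E.vn γ).τ i = l →
      (∃ x, Matrix.vecMul x (E.vn γ).G = wt2vec i j) →
      ∀ δ : Fin E.nC, HasMinDistEq2 (E.cn δ).G →
      ∀ i' j' : Fin (E.cn δ).s, i' ≠ j' → (E.cn δ).τ i' = l →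
      ¬ ∃ y, Matrix.vecMul y (E.cn δ).G = wt2vec i' j') :
    ∀ ε ∈ Set.Ioo (0 : ℝ) 1,
      Pmat E.toVNSide ε * Cmat E.toCNSide = 0 ∧
      specRad (Pmat E.toVNSide ε * Cmat E.toCNSide) = 0 ∧
      LocallyStable E ε := by
  classical
  intro ε hε
  -- key consequence of disjointness
  have hkey : ∀ r : Fin n, (∃ γ, Touched (E.vn γ).G (E.vn γ).τ r) →
      ∀ δ, ¬ Touched (E.cn δ).G (E.cn δ).τ r := by
    rintro r ⟨γ, i, j, hij, hor, x, hx⟩ δ ⟨i', j', hij', hor', y, hy⟩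
    obtain ⟨i0, j0, hij0, hi0, hx0⟩ : ∃ i0 j0, i0 ≠ j0 ∧ (E.vn γ).τ i0 = r ∧
        ∃ x0, Matrix.vecMul x0 (E.vn γ).G = wt2vec i0 j0 := by
      rcases hor with h | h
      · exact ⟨i, j, hij, h, x, hx⟩
      · exact ⟨j, i, hij.symm, h, x, by rw [hx]; exact wt2vec_comm i j⟩
    obtain ⟨i1, j1, hij1, hi1, hy1⟩ : ∃ i1 j1, i1 ≠ j1 ∧ (E.cn δ).τ i1 = r ∧
        ∃ y1, Matrix.vecMul y1 (E.cn δ).G = wt2vec i1 j1 := by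
      rcases hor' with h | h
      · exact ⟨i', j', hij', h, y, hy⟩
      · exact ⟨j', i', hij'.symm, h, y, by rw [hy]; exact wt2vec_comm i' j'⟩
    exact hdisj r γ (touched_eq2 (hV γ).2 ⟨i0, j0, hij0, Or.inl hi0, hx0⟩) i0 j0 hij0 hi0 hx0
      δ (touched_eq2 (hC δ).2 ⟨i1, j1, hij1, Or.inl hi1, hy1⟩) i1 j1 hij1 hi1 hy1
  -- Part 1: P * C = 0
  have hPC : Pmat E.toVNSide ε * Cmat E.toCNSide = 0 := by
    ext l m
    rw [Matrix.mul_apply, Matrix.zero_apply]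
    refine Finset.sum_eq_zero (fun r _ => ?_)
    by_cases hbad : ∃ γ, Touched (E.vn γ).G (E.vn γ).τ r
    · have hC0 : Cmat E.toCNSide r m = 0 := by
        simp only [Cmat, Matrix.of_apply]
        refine Finset.sum_eq_zero (fun δ _ => ?_)
        by_cases h2 : HasMinDistEq2 (E.cn δ).G
        · rw [if_pos h2]
          have hxi : xi2 (E.cn δ).G (E.cn δ).τ r m = 0 := by
            rw [xi2, Finset.card_eq_zero, Finset.filter_eq_empty_iff]
            intro p _
            rintro ⟨hp1, hp2, hp3, hxex⟩
            exact hkey r hbad δ ⟨p.1, p.2, hp1, Or.inl hp2, hxex⟩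
          rw [hxi]; simp
        · rw [if_neg h2]
      rw [hC0, mul_zero]
    · have hP0 : Pmat E.toVNSide ε l r = 0 := by
        simp only [Pmat, Matrix.of_apply]
        refine Finset.sum_eq_zero (fun γ _ => ?_)
        by_cases h2 : HasMinDistEq2 (E.vn γ).G
        · rw [if_pos h2]
          have hchi : ∀ u, chi2 (E.vn γ).G (E.vn γ).τ u l r = 0 := by
            intro u
            rw [chi2, Finset.card_eq_zero, Finset.filter_eq_empty_iff]
            intro p _
            rintro ⟨hp1, hp2, hp3, xx, hxw, hxc⟩
            exact hbad ⟨γ, p.1, p.2, hp1, Or.inr hp3, xx, hxc⟩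
          have hs : ∑ u ∈ Finset.Icc 1 (E.vn γ).k,
              (chi2 (E.vn γ).G (E.vn γ).τ u l r : ℝ) * ε ^ u = 0 :=
            Finset.sum_eq_zero (fun u _ => by rw [hchi u]; simp)
          rw [hs, mul_zero]
        · rw [if_neg h2]
      rw [hP0, zero_mul]
  refine ⟨hPC, ?_, ?_⟩
  -- Part 2: spectral radius
  · rw [hPC, specRad]
    have hmap : (0 : Matrix (Fin n) (Fin n) ℝ).map (fun x : ℝ => (x : ℂ)) = 0 := by
      ext i j; simp
    rw [hmap]
    haveI : Nonempty (Fin n) := Fin.pos_iff_nonempty.mp hn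
    have h0 : spectrum ℂ (0 : Matrix (Fin n) (Fin n) ℂ) = {0} := spectrum.zero_eq
    rw [spectralRadius, h0]
    simp
  -- Part 3: local stability
  · -- CN derivatives
    have hCNex := fun (δ : Fin E.nC) (r : Fin n) => IEC_deriv (E.cn δ).G (E.cn δ).τ r
    choose LC hLC using hCNex
    set LCagg : Fin n → (Fin n → ℝ) →L[ℝ] ℝ := fun r =>
      ∑ δ ∈ Finset.univ.filter (fun δ => 0 < E.toCNSide.rho δ r),
        E.toCNSide.rho δ r • LC δ r with hLCagg
    have hJc : ∀ r, HasFDerivAt (fun I => IECagg E.toCNSide r I) (LCagg r) 1 := by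
      intro r
      have := HasFDerivAt.fun_sum (u := Finset.univ.filter (fun δ => 0 < E.toCNSide.rho δ r))
        (A := fun δ I => E.toCNSide.rho δ r * IEC (E.toCNSide.cn δ).G (E.toCNSide.cn δ).τ r I)
        (A' := fun δ => E.toCNSide.rho δ r • LC δ r) (x := 1)
        (fun δ _ => ((hLC δ r).1.const_mul _))
      simpa only [IECagg] using this
    -- aggregated CN derivative vanishes on "bad" types
    have hLCagg0 : ∀ r, (∃ γ, Touched (E.vn γ).G (E.vn γ).τ r) → LCagg r = 0 := by
      intro r hbad
      rw [hLCagg]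
      refine Finset.sum_eq_zero (fun δ hδ => ?_)
      simp only [Finset.mem_filter, Finset.mem_univ, true_and] at hδ
      rw [(hLC δ r).2 (hC δ).1 (hC δ).2 ((E.toCNSide.rho_pos_iff δ r).mp hδ)
        (hkey r hbad δ), smul_zero]
    -- full inner map
    have hJ : HasFDerivAt (fun I (r : Fin n) => IECagg E.toCNSide r I)
        (ContinuousLinearMap.pi LCagg) 1 := hasFDerivAt_pi.mpr hJc
    have hJ1 : (fun r => IECagg E.toCNSide r (1 : Fin n → ℝ)) = 1 :=
      funext (fun r => IECagg_one E.toCNSide hC r)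
    -- VN derivatives
    have hVNex := fun (γ : Fin E.nV) (e : Fin n) => IEV_deriv (E.vn γ).G (E.vn γ).τ e ε
    choose LV hLV using hVNex
    set LVagg : Fin n → (Fin n → ℝ) →L[ℝ] ℝ := fun e =>
      ∑ γ ∈ Finset.univ.filter (fun γ => 0 < E.toVNSide.lam γ e),
        E.toVNSide.lam γ e • LV γ e with hLVagg
    have hVagg : ∀ e, HasFDerivAt (fun w => IEVagg E.toVNSide e w ε) (LVagg e) 1 := by
      intro e
      have := HasFDerivAt.fun_sum (u := Finset.univ.filter (fun γ => 0 < E.toVNSide.lam γ e))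
        (A := fun γ w => E.toVNSide.lam γ e * IEV (E.toVNSide.vn γ).G (E.toVNSide.vn γ).τ e w ε)
        (A' := fun γ => E.toVNSide.lam γ e • LV γ e) (x := 1)
        (fun γ _ => ((hLV γ e).1.const_mul _))
      simpa only [IEVagg] using this
    -- composed derivative of each component is zero
    have hcomp : ∀ e, HasFDerivAt (fun I => IEVagg E.toVNSide e
        (fun r => IECagg E.toCNSide r I) ε) (0 : (Fin n → ℝ) →L[ℝ] ℝ) 1 := by
      intro e
      have hg : HasFDerivAt (fun w => IEVagg E.toVNSide e w ε) (LVagg e)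
          ((fun I (r : Fin n) => IECagg E.toCNSide r I) 1) := by
        have h1 : ((fun I (r : Fin n) => IECagg E.toCNSide r I) 1) = 1 := hJ1
        rw [h1]; exact hVagg e
      have hcc := hg.comp (1 : Fin n → ℝ) hJ
      have hzero : (LVagg e).comp (ContinuousLinearMap.pi LCagg) = 0 := by
        refine ContinuousLinearMap.ext (fun v => ?_)
        rw [ContinuousLinearMap.comp_apply, ContinuousLinearMap.zero_apply]
        rw [hLVagg]
        rw [ContinuousLinearMap.sum_apply]
        refine Finset.sum_eq_zero (fun γ hγ => ?_)
        simp only [Finset.mem_filter, Finset.mem_univ, true_and] at hγ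
        rw [ContinuousLinearMap.smul_apply]
        have hw : ∀ r, Touched (E.vn γ).G (E.vn γ).τ r →
            (ContinuousLinearMap.pi LCagg) v r = 0 := by
          intro r hr
          have : LCagg r = 0 := hLCagg0 r ⟨γ, hr⟩
          rw [ContinuousLinearMap.pi_apply, this, ContinuousLinearMap.zero_apply]
        rw [(hLV γ e).2 (hV γ).1 (hV γ).2 ((E.toVNSide.lam_pos_iff γ e).mp hγ) _ hw, smul_zero]
      rw [hzero] at hcc
      exact hcc
    have hd : HasFDerivAt (exitMap E ε)
        (0 : (Fin n → ℝ) →L[ℝ] (Fin n → ℝ)) 1 := by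
      have := hasFDerivAt_pi.mpr hcomp
      have hpi0 : ContinuousLinearMap.pi (fun _ : Fin n => (0 : (Fin n → ℝ) →L[ℝ] ℝ))
          = (0 : (Fin n → ℝ) →L[ℝ] (Fin n → ℝ)) := by
        refine ContinuousLinearMap.ext (fun v => ?_)
        funext r
        simp
      rw [hpi0] at this
      exact this
    have hf1 : exitMap E ε 1 = 1 := by
      funext e
      show IEVagg E.toVNSide e (fun r => IECagg E.toCNSide r 1) ε = 1
      rw [hJ1]
      exact IEVagg_one E.toVNSide hV e ε
    rw [LocallyStable]
    exact stable_of_deriv_zero (exitMap E ε) hf1 hd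

end MET
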